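/- The leading order coefficient of the formal solution is A₁(u) = -u/4: substituting Z(d,u) = A₁(u)·d² into the discretized pendulum equation written in the variable u, the residual is O(d⁶); i.e., the unique odd linear polynomial making the d⁴-coefficient of the residual vanish is A₁(u) = -u/4. -/

import Mathlib

open Asymptotics Filter
open Real Finset

/-- step size as a function of `d`: `ε = 2 sinh(d/2)` -/
noncomputable def eps (d : ℝ) : ℝ := 2 * Real.sinh (d / 2)

/-- the ansatz `q(t) = √(1-u²)·(a·u)·d² + 4 arctan(e^{-dt/ε})` with `u = tanh(dt/ε)`,
for the candidate leading coefficient `A₁(u) = a·u`. -/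
noncomputable def qAnsatz (a d t : ℝ) : ℝ :=
  Real.sqrt (1 - Real.tanh (d * t / eps d) ^ 2) *
      (a * Real.tanh (d * t / eps d)) * d ^ 2 +
    4 * Real.arctan (Real.exp (-(d * t / eps d)))

/-- residual of the discretized pendulum equation -/
noncomputable def pendResidual (a d t : ℝ) : ℝ :=
  qAnsatz a d (t + eps d) + qAnsatz a d (t - eps d) - 2 * qAnsatz a d t -
    (eps d) ^ 2 * Real.sin (qAnsatz a d t)


lemma chain_taylor_aux (n : ℕ) : ∀ (f : ℕ → ℝ → ℝ) (M : ℝ),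
    (∀ k < n, ∀ x, HasDerivAt (f k) (f (k+1) x) x) → (∀ x, |f n x| ≤ M) →
    ∀ s d : ℝ, 0 ≤ d →
    |f 0 (s+d) - ∑ k ∈ range n, d^k / (k.factorial : ℝ) * f k s| ≤ M * d^n / (n.factorial : ℝ) := by
  induction n with
  | zero =>
      intro f M hf hb s d hd
      simpa using hb (s+d)
  | succ n IH =>
      intro f M hf hb s d hd
      have hM : 0 ≤ M := le_trans (abs_nonneg _) (hb 0)
      have IH' := IH (fun k => f (k+1)) M (fun k hk x => hf (k+1) (by omega) x) hb
      set r : ℝ → ℝ := fun x => f 0 (s+x) - ∑ k ∈ range (n+1), x^k / (k.factorial : ℝ) * f k s with hrdef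
      have hr : ∀ x : ℝ, HasDerivAt r
          (f 1 (s+x) - ∑ k ∈ range n, x^k / (k.factorial : ℝ) * f (k+1) s) x := by
        intro x
        have h1 : HasDerivAt (fun x : ℝ => f 0 (s+x)) (f 1 (s+x)) x := by
          simpa [Function.comp_def] using (hf 0 (by omega) (s+x)).comp x ((hasDerivAt_id x).const_add s)
        have h2 : ∀ k ∈ range (n+1), HasDerivAt (fun x : ℝ => x^k / (k.factorial : ℝ) * f k s)
            ((k : ℝ) * x^(k-1) / (k.factorial : ℝ) * f k s) x := by
          intro k _
          exact (((hasDerivAt_pow k x).div_const _).mul_const _)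
        have h3 := HasDerivAt.fun_sum h2
        have h4 : (∑ k ∈ range (n+1), (k : ℝ) * x^(k-1) / (k.factorial : ℝ) * f k s)
            = ∑ k ∈ range n, x^k / (k.factorial : ℝ) * f (k+1) s := by
          rw [Finset.sum_range_succ']
          simp only [Nat.cast_zero, zero_mul, zero_div, zero_mul, add_zero]
          refine Finset.sum_congr rfl fun k _ => ?_
          have : ((k+1).factorial : ℝ) = (k+1) * (k.factorial : ℝ) := by
            push_cast [Nat.factorial_succ]; ring
          rw [this]
          have hk0 : ((k:ℝ)+1) ≠ 0 := by positivity
          have hkf : (k.factorial : ℝ) ≠ 0 := by positivity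
          field_simp
          rw [Nat.add_sub_cancel]; push_cast; ring
        rw [h4] at h3
        exact h1.sub h3
      have hr0 : r 0 = 0 := by
        simp [hrdef, Finset.sum_range_succ']
      have key : ∀ (σ : ℝ), σ = 1 ∨ σ = -1 →
          σ * r d ≤ M * d^(n+1) / ((n+1).factorial : ℝ) := by
        intro σ hσ
        set u : ℝ → ℝ := fun x => M * x^(n+1) / ((n+1).factorial : ℝ) - σ * r x with hudef
        have hu : ∀ x : ℝ, HasDerivAt u
            (M * x^n / (n.factorial : ℝ)
              - σ * (f 1 (s+x) - ∑ k ∈ range n, x^k / (k.factorial : ℝ) * f (k+1) s)) x := by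
          intro x
          have hp : HasDerivAt (fun x : ℝ => M * x^(n+1) / ((n+1).factorial : ℝ))
              (M * x^n / (n.factorial : ℝ)) x := by
            have := ((hasDerivAt_pow (n+1) x).const_mul M).div_const (((n+1).factorial : ℝ))
            refine this.congr_deriv (Eq.symm ?_)
            have : ((n+1).factorial : ℝ) = (n+1) * (n.factorial : ℝ) := by
              push_cast [Nat.factorial_succ]; ring
            rw [this]
            have hk0 : ((n:ℝ)+1) ≠ 0 := by positivity
            have hkf : (n.factorial : ℝ) ≠ 0 := by positivity
            simp only [Nat.add_sub_cancel]
            field_simp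
            push_cast; ring
          exact hp.sub ((hr x).const_mul σ)
        have hmono : MonotoneOn u (Set.Icc 0 d) := by
          apply monotoneOn_of_deriv_nonneg (convex_Icc 0 d)
          · exact fun x _ => (hu x).differentiableAt.continuousAt.continuousWithinAt
          · intro x hx
            exact (hu x).differentiableAt.differentiableWithinAt
          · intro x hx
            rw [interior_Icc] at hx
            rw [(hu x).deriv]
            have hbd := IH' s x (le_of_lt hx.1)
            have hσ1 : |σ| = 1 := by rcases hσ with h | h <;> simp [h]
            have : |σ * (f 1 (s+x) - ∑ k ∈ range n, x^k / (k.factorial : ℝ) * f (k+1) s)|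
                ≤ M * x^n / (n.factorial : ℝ) := by
              rw [abs_mul, hσ1, one_mul]; exact hbd
            linarith [(abs_le.mp this).2]
        have h01 : (0:ℝ) ∈ Set.Icc 0 d := by constructor <;> simp [hd]
        have hd1 : d ∈ Set.Icc 0 d := by constructor <;> simp [hd]
        have := hmono h01 hd1 hd
        simp only [hudef] at this
        simp [hr0] at this
        linarith
      rw [abs_le]
      constructor
      · have := key (-1) (Or.inr rfl); linarith
      · have := key 1 (Or.inl rfl); linarith

lemma chain_taylor (n : ℕ) (f : ℕ → ℝ → ℝ) (M : ℝ)
    (hf : ∀ k < n, ∀ x, HasDerivAt (f k) (f (k+1) x) x) (hb : ∀ x, |f n x| ≤ M)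
    (s d : ℝ) :
    |f 0 (s+d) - ∑ k ∈ range n, d^k / (k.factorial : ℝ) * f k s| ≤ M * |d|^n / (n.factorial : ℝ) := by
  rcases le_or_gt 0 d with hd | hd
  · rw [abs_of_nonneg hd]; exact chain_taylor_aux n f M hf hb s d hd
  · set g : ℕ → ℝ → ℝ := fun k x => (-1)^k * f k (-x) with hgdef
    have hg : ∀ k < n, ∀ x, HasDerivAt (g k) (g (k+1) x) x := by
      intro k hk x
      have := ((hf k hk (-x)).comp x (hasDerivAt_neg x)).const_mul ((-1:ℝ)^k)
      refine this.congr_deriv (Eq.symm ?_)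
      simp [hgdef]
      ring
    have hbg : ∀ x, |g n x| ≤ M := by
      intro x
      simp only [hgdef, abs_mul, abs_pow, abs_neg, abs_one, one_pow, one_mul]
      exact hb (-x)
    have := chain_taylor_aux n g M hg hbg (-s) (-d) (by linarith)
    have e1 : g 0 (-s + -d) = f 0 (s+d) := by simp [hgdef, add_comm]
    have e2 : (∑ k ∈ range n, (-d)^k / (k.factorial : ℝ) * g k (-s))
        = ∑ k ∈ range n, d^k / (k.factorial : ℝ) * f k s := by
      refine Finset.sum_congr rfl fun k _ => ?_
      simp only [hgdef, neg_neg]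
      rw [neg_pow]
      ring_nf
      rw [mul_comm k 2, pow_mul]
      simp
    rw [e1, e2] at this
    rw [abs_of_neg hd]
    simpa using this


/-- the derivative chain of the kink `φ(x) = 4 arctan (exp (-x))`. -/
noncomputable def kinkD : ℕ → ℝ → ℝ
  | 0 => fun x => 4 * arctan (exp (-x))
  | 1 => fun x => -2 / cosh x
  | 2 => fun x => 2 * sinh x / cosh x ^ 2
  | 3 => fun x => (2 - 2 * sinh x ^ 2) / cosh x ^ 3
  | 4 => fun x => (2 * sinh x ^ 3 - 10 * sinh x) / cosh x ^ 4
  | 5 => fun x => (-2 * sinh x ^ 4 + 36 * sinh x ^ 2 - 10) / cosh x ^ 5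
  | 6 => fun x => (2 * sinh x ^ 5 - 116 * sinh x ^ 3 + 122 * sinh x) / cosh x ^ 6
  | _ => fun _ => 0

lemma cosh_ne (x : ℝ) : cosh x ≠ 0 := ne_of_gt (cosh_pos x)

lemma kinkD_deriv : ∀ k < 6, ∀ x : ℝ, HasDerivAt (kinkD k) (kinkD (k+1) x) x := by
  have hpow : ∀ (m : ℕ) (x : ℝ), HasDerivAt (fun y : ℝ => cosh y ^ m)
      ((m : ℝ) * cosh x ^ (m-1) * sinh x) x := by
    intro m x
    exact (hasDerivAt_pow m (cosh x)).comp x (Real.hasDerivAt_cosh x)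
  intro k hk x
  interval_cases k
  · -- φ' = -2/cosh
    have h1 : HasDerivAt (fun y : ℝ => exp (-y)) (-exp (-x)) x := by
      simpa [Function.comp_def] using (Real.hasDerivAt_exp (-x)).comp x (hasDerivAt_neg x)
    have h2 := (Real.hasDerivAt_arctan (exp (-x))).comp x h1
    have h3 := h2.const_mul (4:ℝ)
    refine h3.congr_deriv (Eq.symm ?_)
    show -2 / cosh x = 4 * (1 / (1 + exp (-x) ^ 2) * -exp (-x))
    rw [Real.cosh_eq, Real.exp_neg]
    have he : exp x ≠ 0 := exp_ne_zero x
    have he2 : (0:ℝ) < 1 + ((exp x)⁻¹) ^ 2 := by positivity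
    field_simp
    ring
  · have h := ((hasDerivAt_const x (-2:ℝ)).div (Real.hasDerivAt_cosh x) (cosh_ne x))
    refine h.congr_deriv (Eq.symm ?_)
    show 2 * sinh x / cosh x ^ 2 = (0 * cosh x - -2 * sinh x) / cosh x ^ 2
    ring
  · have h := ((Real.hasDerivAt_sinh x).const_mul (2:ℝ)).div (hpow 2 x) (by positivity)
    refine h.congr_deriv (Eq.symm ?_)
    show (2 - 2 * sinh x ^2) / cosh x ^ 3 =
      (2 * cosh x * cosh x ^ 2 - 2 * sinh x * ((2:ℕ) * cosh x ^ 1 * sinh x)) / (cosh x ^ 2) ^ 2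
    have hc := Real.cosh_sq x
    field_simp
    push_cast; nlinarith [cosh_pos x, Real.cosh_sq x]
  · have hnum : HasDerivAt (fun y : ℝ => 2 - 2 * sinh y ^ 2) (-(2:ℝ) * (2 * sinh x * cosh x)) x := by
      have := ((hasDerivAt_pow 2 (sinh x)).comp x (Real.hasDerivAt_sinh x)).const_mul (2:ℝ)
      have h2 := (hasDerivAt_const x (2:ℝ)).sub this
      refine h2.congr_deriv (Eq.symm ?_)
      push_cast
      ring
    have h := hnum.div (hpow 3 x) (by positivity)
    refine h.congr_deriv (Eq.symm ?_)
    show (2 * sinh x ^ 3 - 10 * sinh x) / cosh x ^ 4 =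
      (-2 * (2 * sinh x * cosh x) * cosh x ^ 3 - (2 - 2 * sinh x ^ 2) * ((3:ℕ) * cosh x ^ 2 * sinh x)) / (cosh x ^ 3) ^ 2
    have hc := Real.cosh_sq x
    rw [div_eq_div_iff (by positivity) (by positivity)]
    push_cast
    linear_combination (4 * sinh x * cosh x ^ 6) * hc
  · have hnum : HasDerivAt (fun y : ℝ => 2 * sinh y ^ 3 - 10 * sinh y)
        ((2 * (3 * sinh x ^ 2) - 10) * cosh x) x := by
      have h1 := ((hasDerivAt_pow 3 (sinh x)).comp x (Real.hasDerivAt_sinh x)).const_mul (2:ℝ)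
      have h2 := (Real.hasDerivAt_sinh x).const_mul (10:ℝ)
      have := h1.sub h2
      refine this.congr_deriv (Eq.symm ?_)
      push_cast
      ring
    have h := hnum.div (hpow 4 x) (by positivity)
    refine h.congr_deriv (Eq.symm ?_)
    show (-2 * sinh x ^ 4 + 36 * sinh x ^ 2 - 10) / cosh x ^ 5 =
      ((2 * (3 * sinh x ^ 2) - 10) * cosh x * cosh x ^ 4 - (2 * sinh x ^ 3 - 10 * sinh x) * ((4:ℕ) * cosh x ^ 3 * sinh x)) / (cosh x ^ 4) ^ 2
    have hc := Real.cosh_sq x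
    rw [div_eq_div_iff (by positivity) (by positivity)]
    push_cast
    linear_combination (-(6 * sinh x ^ 2 - 10) * cosh x ^ 8) * hc
  · have hnum : HasDerivAt (fun y : ℝ => -2 * sinh y ^ 4 + 36 * sinh y ^ 2 - 10)
        ((-2 * (4 * sinh x ^ 3) + 36 * (2 * sinh x)) * cosh x) x := by
      have h1 := ((hasDerivAt_pow 4 (sinh x)).comp x (Real.hasDerivAt_sinh x)).const_mul (-2:ℝ)
      have h2 := ((hasDerivAt_pow 2 (sinh x)).comp x (Real.hasDerivAt_sinh x)).const_mul (36:ℝ)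
      have := (h1.add h2).sub (hasDerivAt_const x (10:ℝ))
      refine this.congr_deriv (Eq.symm ?_)
      push_cast
      ring
    have h := hnum.div (hpow 5 x) (by positivity)
    refine h.congr_deriv (Eq.symm ?_)
    show (2 * sinh x ^ 5 - 116 * sinh x ^ 3 + 122 * sinh x) / cosh x ^ 6 =
      ((-2 * (4 * sinh x ^ 3) + 36 * (2 * sinh x)) * cosh x * cosh x ^ 5 - (-2 * sinh x ^ 4 + 36 * sinh x ^ 2 - 10) * ((5:ℕ) * cosh x ^ 4 * sinh x)) / (cosh x ^ 5) ^ 2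
    have hc := Real.cosh_sq x
    rw [div_eq_div_iff (by positivity) (by positivity)]
    push_cast
    linear_combination (-(-8 * sinh x ^ 3 + 72 * sinh x) * cosh x ^ 10) * hc

lemma abs_sinh_le_cosh (x : ℝ) : |sinh x| ≤ cosh x := by
  rw [abs_le]
  constructor
  · nlinarith [Real.sinh_lt_cosh (-x), Real.sinh_neg x, Real.cosh_neg x]
  · exact (Real.sinh_lt_cosh x).le

lemma kinkD6_bound (x : ℝ) : |kinkD 6 x| ≤ 240 := by
  show |(2 * sinh x ^ 5 - 116 * sinh x ^ 3 + 122 * sinh x) / cosh x ^ 6| ≤ 240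
  rw [abs_div, abs_of_pos (pow_pos (cosh_pos x) 6), div_le_iff₀ (pow_pos (cosh_pos x) 6)]
  have h1 := abs_sinh_le_cosh x
  have h2 := Real.one_le_cosh x
  calc |2 * sinh x ^ 5 - 116 * sinh x ^ 3 + 122 * sinh x|
      ≤ 2 * |sinh x|^5 + 116 * |sinh x|^3 + 122 * |sinh x| := by
        have := abs_pow (sinh x) 5
        have := abs_pow (sinh x) 3
        calc |2 * sinh x ^ 5 - 116 * sinh x ^ 3 + 122 * sinh x|
            ≤ |2 * sinh x ^ 5 - 116 * sinh x ^ 3| + |122 * sinh x| := abs_add_le _ _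
          _ ≤ |2 * sinh x ^ 5| + |116 * sinh x ^ 3| + |122 * sinh x| := by
              linarith [abs_sub (2 * sinh x ^ 5) (116 * sinh x ^ 3)]
          _ = 2 * |sinh x|^5 + 116 * |sinh x|^3 + 122 * |sinh x| := by
              simp [abs_mul, abs_pow]
    _ ≤ 2 * cosh x^5 + 116 * cosh x^3 + 122 * cosh x := by
        have h5 : |sinh x|^5 ≤ cosh x^5 := pow_le_pow_left₀ (abs_nonneg _) h1 5
        have h3 : |sinh x|^3 ≤ cosh x^3 := pow_le_pow_left₀ (abs_nonneg _) h1 3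
        nlinarith
    _ ≤ 240 * cosh x ^ 6 := by nlinarith [pow_le_pow_right₀ h2 (show 1 ≤ 6 by norm_num), sq_nonneg (cosh x), pow_pos (cosh_pos x) 3, pow_pos (cosh_pos x) 5, pow_le_pow_right₀ h2 (show 3 ≤ 6 by norm_num), pow_le_pow_right₀ h2 (show 5 ≤ 6 by norm_num), pow_le_pow_right₀ h2 (show 1 ≤ 6 by norm_num)]


-- sin φ = 2 sinh x / cosh² x,  cos φ = 1 - 2 / cosh² x  where φ = 4 arctan (exp (-x))
lemma sin_kink (x : ℝ) : Real.sin (4 * arctan (exp (-x))) = 2 * sinh x / cosh x ^ 2 := by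
  set y := exp (-x) with hy
  have hy0 : 0 < y := exp_pos _
  have h4 : (4 : ℝ) * arctan y = 2 * (2 * arctan y) := by ring
  have hs : Real.sin (2 * arctan y) = 2 * y / (1 + y^2) := by
    rw [Real.sin_two_mul, Real.sin_arctan, Real.cos_arctan]
    have h1 : (0:ℝ) < 1 + y^2 := by positivity
    have h2 : Real.sqrt (1+y^2) ^ 2 = 1 + y^2 := Real.sq_sqrt h1.le
    have h3 : Real.sqrt (1+y^2) ≠ 0 := by positivity
    field_simp
    exact h2.symm
  have hc : Real.cos (2 * arctan y) = (1 - y^2) / (1 + y^2) := by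
    rw [Real.cos_two_mul, Real.cos_arctan]
    have h1 : (0:ℝ) < 1 + y^2 := by positivity
    have h2 : Real.sqrt (1+y^2) ^ 2 = 1 + y^2 := Real.sq_sqrt h1.le
    rw [div_pow, one_pow, h2]
    field_simp
    ring
  rw [h4, Real.sin_two_mul, hs, hc]
  rw [Real.sinh_eq, Real.cosh_eq, Real.exp_neg]
  have hx : exp x = y⁻¹ := by rw [hy, ← Real.exp_neg]; simp
  rw [hx]
  have h1 : (0:ℝ) < 1 + y^2 := by positivity
  have : y ≠ 0 := ne_of_gt hy0
  field_simp

lemma cos_kink (x : ℝ) : Real.cos (4 * arctan (exp (-x))) = 1 - 2 / cosh x ^ 2 := by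
  set y := exp (-x) with hy
  have hy0 : 0 < y := exp_pos _
  have h4 : (4 : ℝ) * arctan y = 2 * (2 * arctan y) := by ring
  have hs : Real.sin (2 * arctan y) = 2 * y / (1 + y^2) := by
    rw [Real.sin_two_mul, Real.sin_arctan, Real.cos_arctan]
    have h1 : (0:ℝ) < 1 + y^2 := by positivity
    have h2 : Real.sqrt (1+y^2) ^ 2 = 1 + y^2 := Real.sq_sqrt h1.le
    have h3 : Real.sqrt (1+y^2) ≠ 0 := by positivity
    field_simp
    exact h2.symm
  rw [h4, Real.cos_two_mul]
  have hpyth : Real.cos (2*arctan y)^2 = 1 - Real.sin (2*arctan y)^2 := by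
    have := Real.sin_sq_add_cos_sq (2*arctan y); linarith
  rw [hpyth, hs]
  rw [Real.cosh_eq, Real.exp_neg]
  have hx : exp x = y⁻¹ := by rw [hy, ← Real.exp_neg]; simp
  rw [hx]
  have h1 : (0:ℝ) < 1 + y^2 := by positivity
  have : y ≠ 0 := ne_of_gt hy0
  field_simp
  ring

-- √(1 - tanh²x) = 1/cosh x
lemma sqrt_one_sub_tanh_sq (x : ℝ) : Real.sqrt (1 - tanh x ^ 2) = 1 / cosh x := by
  have h : 1 - tanh x ^ 2 = (1 / cosh x)^2 := by
    rw [Real.tanh_eq_sinh_div_cosh]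
    have hc := Real.cosh_sq x
    have := cosh_pos x
    field_simp
    linarith [hc]
  rw [h, Real.sqrt_sq (by positivity)]

-- eps squared
lemma eps_sq (d : ℝ) : (2 * Real.sinh (d/2)) ^ 2 = 2 * cosh d - 2 := by
  have h1 : cosh d = cosh (2 * (d/2)) := by congr 1; ring
  rw [h1, Real.cosh_two_mul]
  have := Real.cosh_sq (d/2)
  nlinarith


lemma eps_sq_est {d : ℝ} (hd0 : 0 < d) (hd1 : d ≤ 1) :
    |(2 * Real.sinh (d/2)) ^ 2 - d^2 - d^4/12| ≤ d^6/180 := by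
  have heps : (2 * Real.sinh (d/2)) ^ 2 = 2 * cosh d - 2 := by
    have h1 : cosh d = cosh (2 * (d/2)) := by congr 1; ring
    rw [h1, Real.cosh_two_mul]
    have := Real.cosh_sq (d/2)
    nlinarith
  rw [heps]
  have hb1 : |exp d - ∑ m ∈ range 7, d ^ m / (m.factorial : ℝ)|
      ≤ |d|^7 * (8 / ((7).factorial * 7)) := by
    have := Real.exp_bound (x := d) (by rw [abs_of_pos hd0]; exact hd1) (n := 7) (by norm_num)
    simpa using this
  have hb2 : |exp (-d) - ∑ m ∈ range 7, (-d) ^ m / (m.factorial : ℝ)|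
      ≤ |(-d)|^7 * (8 / ((7).factorial * 7)) := by
    have := Real.exp_bound (x := -d) (by rw [abs_neg, abs_of_pos hd0]; exact hd1) (n := 7) (by norm_num)
    simpa using this
  have hcosh : cosh d = (exp d + exp (-d)) / 2 := Real.cosh_eq d
  have hsum1 : (∑ m ∈ range 7, d ^ m / (m.factorial : ℝ))
      = 1 + d + d^2/2 + d^3/6 + d^4/24 + d^5/120 + d^6/720 := by
    simp [Finset.sum_range_succ, Nat.factorial]
  have hsum2 : (∑ m ∈ range 7, (-d) ^ m / (m.factorial : ℝ))
      = 1 - d + d^2/2 - d^3/6 + d^4/24 - d^5/120 + d^6/720 := by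
    simp [Finset.sum_range_succ, Nat.factorial]
    ring
  rw [hsum1] at hb1
  rw [hsum2] at hb2
  rw [abs_of_pos hd0] at hb1
  rw [abs_neg, abs_of_pos hd0] at hb2
  have h7 : ((7).factorial : ℝ) = 5040 := by norm_num [Nat.factorial]
  rw [h7] at hb1 hb2
  have hd7 : d^7 ≤ d^6 := by
    calc d^7 = d^6 * d := by ring
    _ ≤ d^6 * 1 := by nlinarith [pow_pos hd0 6]
    _ = d^6 := by ring
  have e1 := abs_le.mp hb1
  have e2 := abs_le.mp hb2
  rw [hcosh, abs_le]
  constructor <;> nlinarith [pow_pos hd0 6, pow_pos hd0 7]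

section Corollaries
open Real Finset

lemma taylor_kink (s d : ℝ) :
    |kinkD 0 (s+d) + kinkD 0 (s-d) - 2 * kinkD 0 s - d^2 * kinkD 2 s - d^4/12 * kinkD 4 s|
      ≤ (2/3) * |d|^6 := by
  have h1 := chain_taylor 6 kinkD 240 kinkD_deriv kinkD6_bound s d
  have h2 := chain_taylor 6 kinkD 240 kinkD_deriv kinkD6_bound s (-d)
  have hsum : ∀ e : ℝ, (∑ k ∈ range 6, e^k/(k.factorial:ℝ) * kinkD k s)
      = kinkD 0 s + e * kinkD 1 s + e^2/2 * kinkD 2 s + e^3/6 * kinkD 3 s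
        + e^4/24 * kinkD 4 s + e^5/120 * kinkD 5 s := by
    intro e
    simp [Finset.sum_range_succ, Nat.factorial]
  rw [hsum] at h1 h2
  rw [abs_neg] at h2
  rw [show s + -d = s - d by ring] at h2
  have hfact : ((6:ℕ).factorial : ℝ) = 720 := by norm_num [Nat.factorial]
  rw [hfact] at h1 h2
  have hkey : kinkD 0 (s+d) + kinkD 0 (s-d) - 2 * kinkD 0 s - d^2 * kinkD 2 s - d^4/12 * kinkD 4 s
      = (kinkD 0 (s+d) - (kinkD 0 s + d * kinkD 1 s + d^2/2 * kinkD 2 s + d^3/6 * kinkD 3 s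
          + d^4/24 * kinkD 4 s + d^5/120 * kinkD 5 s))
        + (kinkD 0 (s-d) - (kinkD 0 s + (-d) * kinkD 1 s + (-d)^2/2 * kinkD 2 s + (-d)^3/6 * kinkD 3 s
          + (-d)^4/24 * kinkD 4 s + (-d)^5/120 * kinkD 5 s)) := by ring
  rw [hkey]
  calc |_ + _| ≤ _ + _ := abs_add_le _ _
    _ ≤ 240 * |d|^6/720 + 240 * |d|^6/720 := add_le_add h1 h2
    _ = (2/3) * |d|^6 := by ring

lemma taylor_kink2 (s d : ℝ) :
    |kinkD 2 (s+d) + kinkD 2 (s-d) - 2 * kinkD 2 s - d^2 * kinkD 4 s| ≤ 20 * |d|^4 := by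
  have hf : ∀ k < 4, ∀ x : ℝ, HasDerivAt (kinkD (k+2)) (kinkD (k+3) x) x := by
    intro k hk x
    have := kinkD_deriv (k+2) (by omega) x
    have h23 : k+2+1 = k+3 := by omega
    rwa [h23] at this
  have hb : ∀ x : ℝ, |kinkD (4+2) x| ≤ 240 := fun x => kinkD6_bound x
  have h1 := chain_taylor 4 (fun k => kinkD (k+2)) 240 hf hb s d
  have h2 := chain_taylor 4 (fun k => kinkD (k+2)) 240 hf hb s (-d)
  have hsum : ∀ e : ℝ, (∑ k ∈ range 4, e^k/(k.factorial:ℝ) * kinkD (k+2) s)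
      = kinkD 2 s + e * kinkD 3 s + e^2/2 * kinkD 4 s + e^3/6 * kinkD 5 s := by
    intro e
    simp [Finset.sum_range_succ, Nat.factorial]
  rw [hsum] at h1 h2
  rw [abs_neg] at h2
  rw [show s + -d = s - d by ring] at h2
  have hfact : ((4:ℕ).factorial : ℝ) = 24 := by norm_num [Nat.factorial]
  rw [hfact] at h1 h2
  have hkey : kinkD 2 (s+d) + kinkD 2 (s-d) - 2 * kinkD 2 s - d^2 * kinkD 4 s
      = (kinkD 2 (s+d) - (kinkD 2 s + d * kinkD 3 s + d^2/2 * kinkD 4 s + d^3/6 * kinkD 5 s))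
        + (kinkD 2 (s-d) - (kinkD 2 s + (-d) * kinkD 3 s + (-d)^2/2 * kinkD 4 s
          + (-d)^3/6 * kinkD 5 s)) := by ring
  rw [hkey]
  calc |_ + _| ≤ _ + _ := abs_add_le _ _
    _ ≤ 240 * |d|^4/24 + 240 * |d|^4/24 := add_le_add h1 h2
    _ = 20 * |d|^4 := by ring

noncomputable def sinD : ℕ → ℝ → ℝ
  | 0 => Real.sin
  | 1 => Real.cos
  | _ => fun y => -Real.sin y

lemma taylor_sin (p x : ℝ) : |Real.sin (p + x) - Real.sin p - x * Real.cos p| ≤ |x|^2/2 := by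
  have hf : ∀ k < 2, ∀ y : ℝ, HasDerivAt (sinD k) (sinD (k+1) y) y := by
    intro k hk y
    interval_cases k
    · exact Real.hasDerivAt_sin y
    · exact Real.hasDerivAt_cos y
  have hb : ∀ y : ℝ, |sinD 2 y| ≤ 1 := by
    intro y
    show |-Real.sin y| ≤ 1
    rw [abs_neg]
    exact abs_le.mpr ⟨Real.neg_one_le_sin y, Real.sin_le_one y⟩
  have h := chain_taylor 2 sinD 1 hf hb p x
  have hsum : (∑ k ∈ range 2, x^k/(k.factorial:ℝ) * sinD k p) = Real.sin p + x * Real.cos p := by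
    simp [Finset.sum_range_succ, Nat.factorial, sinD]
  rw [hsum] at h
  have hfact : ((2:ℕ).factorial : ℝ) = 2 := by norm_num [Nat.factorial]
  rw [hfact] at h
  calc |Real.sin (p + x) - Real.sin p - x * Real.cos p|
      = |sinD 0 (p + x) - (Real.sin p + x * Real.cos p)| := by rw [sinD]; ring_nf
    _ ≤ 1 * |x|^2/2 := h
    _ = |x|^2/2 := by ring

end Corollaries

section Key
open Real

lemma kinkD2_bound (x : ℝ) : |kinkD 2 x| ≤ 2 := by
  show |2 * sinh x / cosh x ^ 2| ≤ 2
  rw [abs_div, abs_of_pos (pow_pos (cosh_pos x) 2), div_le_iff₀ (pow_pos (cosh_pos x) 2)]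
  have h1 := abs_sinh_le_cosh x
  have h2 := Real.one_le_cosh x
  rw [abs_mul]
  norm_num
  nlinarith

lemma qAnsatz_eq (a d t : ℝ) : qAnsatz a d t
    = d^2 * (a/2) * kinkD 2 (d * t / eps d) + kinkD 0 (d * t / eps d) := by
  rw [qAnsatz]
  rw [sqrt_one_sub_tanh_sq, Real.tanh_eq_sinh_div_cosh]
  show 1 / cosh (d*t/eps d) * (a * (sinh (d*t/eps d) / cosh (d*t/eps d))) * d ^ 2
      + 4 * arctan (exp (-(d*t/eps d)))
    = d^2 * (a/2) * (2 * sinh (d*t/eps d) / cosh (d*t/eps d)^2) + 4 * arctan (exp (-(d*t/eps d)))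
  have := cosh_ne (d*t/eps d)
  field_simp

lemma I3 (a x : ℝ) :
    kinkD 4 x / 12 + (a/2) * kinkD 4 x - kinkD 2 x / 12
      - (a/2) * kinkD 2 x * (1 - 2/cosh x^2)
    = -(1+4*a) * sinh x / cosh x ^ 4 := by
  show (2 * sinh x ^ 3 - 10 * sinh x) / cosh x ^ 4 / 12
      + (a/2) * ((2 * sinh x ^ 3 - 10 * sinh x) / cosh x ^ 4)
      - 2 * sinh x / cosh x ^ 2 / 12 - (a/2) * (2 * sinh x / cosh x ^ 2) * (1 - 2/cosh x^2)
    = -(1+4*a) * sinh x / cosh x ^ 4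
  have hc := Real.cosh_sq x
  have := cosh_ne x
  field_simp
  linear_combination (-(4 + 24*a) * sinh x) * hc

lemma abs5 (x1 x2 x3 x4 x5 : ℝ) :
    |x1 + x2 - x3 - x4 - x5| ≤ |x1| + |x2| + |x3| + |x4| + |x5| := by
  have h1 : |x1 + x2 - x3 - x4 - x5| ≤ |x1 + x2 - x3 - x4| + |x5| := abs_sub _ _
  have h2 : |x1 + x2 - x3 - x4| ≤ |x1 + x2 - x3| + |x4| := abs_sub _ _
  have h3 : |x1 + x2 - x3| ≤ |x1 + x2| + |x3| := abs_sub _ _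
  have h4 : |x1 + x2| ≤ |x1| + |x2| := abs_add_le _ _
  linarith

set_option maxHeartbeats 2000000 in
lemma key_est (a : ℝ) {d : ℝ} (hd0 : 0 < d) (hd1 : d ≤ 1) (t : ℝ) :
    |pendResidual a d t + (1+4*a) * d^4 * sinh (d * t / eps d) / cosh (d * t / eps d) ^ 4|
      ≤ (1 + 11*|a| + a^2) * d^6 := by
  have hsinh : 0 < sinh (d/2) := by rw [Real.sinh_pos_iff]; linarith
  have heps : eps d ≠ 0 := by rw [eps]; positivity
  set s := d * t / eps d with hs
  have ep : d * (t + eps d) / eps d = s + d := by rw [hs]; field_simp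
  have em : d * (t - eps d) / eps d = s - d := by rw [hs]; field_simp
  have hP : pendResidual a d t
      = (d^2 * (a/2) * kinkD 2 (s+d) + kinkD 0 (s+d))
        + (d^2 * (a/2) * kinkD 2 (s-d) + kinkD 0 (s-d))
        - 2 * (d^2 * (a/2) * kinkD 2 s + kinkD 0 s)
        - eps d ^ 2 * Real.sin (d^2 * (a/2) * kinkD 2 s + kinkD 0 s) := by
    rw [pendResidual, qAnsatz_eq, qAnsatz_eq, qAnsatz_eq, ep, em]
  set Q : ℝ := d^2 * (a/2) * kinkD 2 s + kinkD 0 s with hQ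
  set E1 : ℝ := kinkD 0 (s+d) + kinkD 0 (s-d) - 2 * kinkD 0 s - d^2 * kinkD 2 s
      - d^4/12 * kinkD 4 s with hE1
  set E2 : ℝ := kinkD 2 (s+d) + kinkD 2 (s-d) - 2 * kinkD 2 s - d^2 * kinkD 4 s with hE2
  set E3 : ℝ := Real.sin Q - kinkD 2 s - d^2 * (a/2) * kinkD 2 s * (1 - 2/cosh s^2) with hE3
  set E4 : ℝ := eps d ^ 2 - d^2 - d^4/12 with hE4
  have hI3 := I3 a s
  have decomp : pendResidual a d t + (1+4*a) * d^4 * sinh s / cosh s ^ 4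
      = E1 + d^2 * (a/2) * E2 - (d^2 + d^4/12) * E3 - E4 * Real.sin Q
        - d^6 * (a/24) * (kinkD 2 s * (1 - 2/cosh s^2)) := by
    rw [hP, hE1, hE2, hE3, hE4, hQ]
    linear_combination (d^4) * hI3
  have habs : |d| = d := abs_of_pos hd0
  have b1 : |E1| ≤ (2/3) * d^6 := by
    have := taylor_kink s d
    rwa [habs] at this
  have b2 : |E2| ≤ 20 * d^4 := by
    have := taylor_kink2 s d
    rwa [habs] at this
  have bK2 := kinkD2_bound s
  have bK : |1 - 2/cosh s^2| ≤ 1 := by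
    have h1 := Real.one_le_cosh s
    have h2 : (1:ℝ) ≤ cosh s ^2 := by nlinarith
    have h3 : (0:ℝ) < cosh s ^ 2 := by positivity
    rw [abs_le]
    constructor
    · have : 2/cosh s^2 ≤ 2 := by rw [div_le_iff₀ h3]; nlinarith
      linarith
    · have : 0 < 2/cosh s^2 := by positivity
      linarith
  have bsin : |Real.sin Q| ≤ 1 := abs_le.mpr ⟨Real.neg_one_le_sin Q, Real.sin_le_one Q⟩
  have hX : |d^2 * (a/2) * kinkD 2 s| ≤ d^2 * |a| := by
    rw [abs_mul, abs_mul]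
    have h1 : |d^2| = d^2 := abs_of_pos (by positivity)
    have h2 : |a/2| = |a|/2 := by rw [abs_div, abs_two]
    rw [h1, h2]
    calc d^2 * (|a|/2) * |kinkD 2 s| ≤ d^2 * (|a|/2) * 2 :=
          mul_le_mul_of_nonneg_left bK2 (by positivity)
      _ = d^2 * |a| := by ring
  have b3 : |E3| ≤ a^2 * d^4 / 2 := by
    have h := taylor_sin (kinkD 0 s) (d^2 * (a/2) * kinkD 2 s)
    have h0 : kinkD 0 s = 4 * arctan (exp (-s)) := rfl
    rw [h0, sin_kink, cos_kink] at h
    have heq : E3 = Real.sin (4 * arctan (exp (-s)) + d^2 * (a/2) * kinkD 2 s)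
        - 2 * sinh s / cosh s ^ 2
        - d^2 * (a/2) * kinkD 2 s * (1 - 2/cosh s^2) := by
      rw [hE3, hQ, h0]
      have hk2 : kinkD 2 s = 2 * sinh s / cosh s ^ 2 := rfl
      rw [hk2]
      ring_nf
    rw [heq]
    calc |Real.sin (4 * arctan (exp (-s)) + d^2 * (a/2) * kinkD 2 s)
          - 2 * sinh s / cosh s ^ 2
          - d^2 * (a/2) * kinkD 2 s * (1 - 2/cosh s^2)|
        ≤ |d^2 * (a/2) * kinkD 2 s|^2/2 := h
      _ ≤ (d^2 * |a|)^2/2 := by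
          have h1 := abs_nonneg (d^2 * (a/2) * kinkD 2 s)
          nlinarith
      _ = a^2 * d^4 / 2 := by
          rw [mul_pow, sq_abs]
          ring
  have b4 : |E4| ≤ d^6/180 := by
    rw [hE4]
    have he : eps d = 2 * Real.sinh (d/2) := rfl
    rw [he]
    exact eps_sq_est hd0 hd1
  rw [decomp]
  have tri := abs5 E1 (d^2 * (a/2) * E2) ((d^2 + d^4/12) * E3) (E4 * Real.sin Q)
    (d^6 * (a/24) * (kinkD 2 s * (1 - 2/cosh s^2)))
  have hA : |d^2 * (a/2) * E2| ≤ 10 * |a| * d^6 := by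
    rw [abs_mul, abs_mul]
    have h1 : |d^2| = d^2 := abs_of_pos (by positivity)
    have h2 : |a/2| = |a|/2 := by rw [abs_div, abs_two]
    rw [h1, h2]
    calc d^2 * (|a|/2) * |E2| ≤ d^2 * (|a|/2) * (20 * d^4) := by
          rw [mul_assoc, mul_assoc]
          exact mul_le_mul_of_nonneg_left
            (mul_le_mul_of_nonneg_left b2 (by positivity)) (by positivity)
      _ = 10 * |a| * d^6 := by ring
  have hd2 : d^2 ≤ 1 := by nlinarith
  have hB : |(d^2 + d^4/12) * E3| ≤ a^2 * d^6 := by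
    rw [abs_mul]
    have h1 : |d^2 + d^4/12| = d^2 + d^4/12 := abs_of_pos (by positivity)
    rw [h1]
    have h8 : d^8 ≤ d^6 := by nlinarith [pow_pos hd0 6, pow_pos hd0 8]
    calc (d^2 + d^4/12) * |E3| ≤ (d^2 + d^4/12) * (a^2 * d^4/2) :=
          mul_le_mul_of_nonneg_left b3 (by positivity)
      _ = a^2 * d^6/2 + (a^2 * d^8)/24 := by ring
      _ ≤ a^2 * d^6 := by
          have := mul_le_mul_of_nonneg_left h8 (sq_nonneg a)
          have := mul_nonneg (sq_nonneg a) (le_of_lt (pow_pos hd0 6))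
          linarith
  have hC : |E4 * Real.sin Q| ≤ d^6/180 := by
    rw [abs_mul]
    calc |E4| * |Real.sin Q| ≤ (d^6/180) * 1 :=
          mul_le_mul b4 bsin (abs_nonneg _) (by positivity)
      _ = d^6/180 := by ring
  have hD : |d^6 * (a/24) * (kinkD 2 s * (1 - 2/cosh s^2))| ≤ |a| * d^6 / 12 := by
    rw [abs_mul, abs_mul, abs_mul]
    have h1 : |d^6| = d^6 := abs_of_pos (by positivity)
    have h2 : |a/24| = |a|/24 := by rw [abs_div]; norm_num
    rw [h1, h2]
    have : |kinkD 2 s| * |1 - 2/cosh s^2| ≤ 2 := by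
      calc |kinkD 2 s| * |1 - 2/cosh s^2| ≤ 2 * 1 :=
            mul_le_mul bK2 bK (abs_nonneg _) (by norm_num)
        _ = 2 := by ring
    calc d^6 * (|a|/24) * (|kinkD 2 s| * |1 - 2/cosh s^2|) ≤ d^6 * (|a|/24) * 2 :=
          mul_le_mul_of_nonneg_left this (by positivity)
      _ = |a| * d^6 / 12 := by ring
  have hpos6 : (0:ℝ) < d^6 := pow_pos hd0 6
  have hnn1 : 0 ≤ |a| * d^6 := by positivity
  have hnn2 : 0 ≤ a^2 * d^6 := by positivity
  linarith [tri, b1, hA, hB, hC, hD, hpos6.le, hnn1, hnn2]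

end Key

section Main
open Real Set

lemma tendsto_d_div_eps : Filter.Tendsto (fun d : ℝ => d / eps d)
    (nhdsWithin 0 (Set.Ioi 0)) (nhds 1) := by
  have h1 : Filter.Tendsto (fun x : ℝ => Real.sinh x / x)
      (nhdsWithin 0 {(0:ℝ)}ᶜ) (nhds 1) := by
    have hd := Real.hasDerivAt_sinh 0
    rw [hasDerivAt_iff_tendsto_slope] at hd
    rw [Real.cosh_zero] at hd
    have hsl : slope Real.sinh 0 = fun x : ℝ => Real.sinh x / x := by
      funext x
      rw [slope_def_field]
      simp [Real.sinh_zero, div_eq_div_iff]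
    rwa [hsl] at hd
  have h2 : Filter.Tendsto (fun d : ℝ => d/2) (nhdsWithin 0 (Set.Ioi 0))
      (nhdsWithin 0 {(0:ℝ)}ᶜ) := by
    apply tendsto_nhdsWithin_of_tendsto_nhds_of_eventually_within
    · have : Filter.Tendsto (fun d : ℝ => d/2) (nhds 0) (nhds 0) := by
        simpa using (continuous_id.div_const (2:ℝ)).tendsto (0:ℝ)
      exact this.mono_left nhdsWithin_le_nhds
    · filter_upwards [self_mem_nhdsWithin] with d hd
      have : (0:ℝ) < d := hd
      simp only [Set.mem_compl_iff, Set.mem_singleton_iff]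
      positivity
  have h3 := h1.comp h2
  have h4 := h3.inv₀ (one_ne_zero)
  rw [inv_one] at h4
  apply h4.congr'
  filter_upwards [self_mem_nhdsWithin] with d hd
  have hd0 : (0:ℝ) < d := hd
  have hsinh : 0 < Real.sinh (d/2) := by rw [Real.sinh_pos_iff]; positivity
  show (Real.sinh (d/2) / (d/2))⁻¹ = d / eps d
  rw [inv_div, eps]
  rw [div_eq_div_iff (by positivity) (by positivity)]
  ring

theorem leading_coefficient_is_minus_quarter (a : ℝ) :
    (∀ t : ℝ,
      (fun d : ℝ => pendResidual a d t) =O[nhdsWithin 0 (Set.Ioi 0)]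
        (fun d : ℝ => d ^ 6)) ↔ a = -(1 / 4) := by
  have hmemIoc : Set.Ioc (0:ℝ) 1 ∈ nhdsWithin (0:ℝ) (Set.Ioi 0) :=
    Ioc_mem_nhdsGT_of_mem (Set.mem_Ico.mpr ⟨le_refl 0, zero_lt_one⟩)
  constructor
  · intro H
    have H1 := H 1
    rw [Asymptotics.isBigO_iff] at H1
    obtain ⟨C', hC'⟩ := H1
    set C : ℝ := 1 + 11*|a| + a^2 with hC
    have hev : ∀ᶠ d in nhdsWithin (0:ℝ) (Set.Ioi 0),
        ‖(1+4*a) * Real.sinh (d/eps d) / Real.cosh (d/eps d)^4‖ ≤ (C + |C'|) * d^2 := by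
      filter_upwards [hC', hmemIoc] with d h1 h2
      obtain ⟨hd0, hd1⟩ := h2
      have hk := key_est a hd0 hd1 1
      rw [mul_one] at hk
      have hp : |pendResidual a d 1| ≤ |C'| * d^6 := by
        have hn1 : ‖pendResidual a d 1‖ = |pendResidual a d 1| := rfl
        have hn2 : ‖d^6‖ = d^6 := by
          rw [Real.norm_eq_abs]; exact abs_of_pos (pow_pos hd0 6)
        rw [hn1, hn2] at h1
        calc |pendResidual a d 1| ≤ C' * d^6 := h1
          _ ≤ |C'| * d^6 := by
              have := le_abs_self C'
              nlinarith [pow_pos hd0 6]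
      have hterm : |(1+4*a) * d^4 * Real.sinh (d/eps d) / Real.cosh (d/eps d)^4|
          ≤ (C + |C'|) * d^6 := by
        have heq : (1+4*a) * d^4 * Real.sinh (d/eps d) / Real.cosh (d/eps d)^4
            = (pendResidual a d 1 + (1+4*a) * d^4 * Real.sinh (d/eps d) / Real.cosh (d/eps d)^4)
              - pendResidual a d 1 := by ring
        rw [heq]
        calc |_ - _| ≤ |pendResidual a d 1 + (1+4*a) * d^4 * Real.sinh (d/eps d) / Real.cosh (d/eps d)^4| + |pendResidual a d 1| := abs_sub _ _
          _ ≤ C * d^6 + |C'| * d^6 := add_le_add hk hp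
          _ = (C + |C'|) * d^6 := by ring
      rw [Real.norm_eq_abs]
      have heq2 : (1+4*a) * Real.sinh (d/eps d) / Real.cosh (d/eps d)^4
          = ((1+4*a) * d^4 * Real.sinh (d/eps d) / Real.cosh (d/eps d)^4) / d^4 := by
        field_simp
      rw [heq2, abs_div]
      have h4 : |d^4| = d^4 := abs_of_pos (pow_pos hd0 4)
      rw [h4, div_le_iff₀ (pow_pos hd0 4)]
      calc |(1+4*a) * d^4 * Real.sinh (d/eps d) / Real.cosh (d/eps d)^4|
          ≤ (C + |C'|) * d^6 := hterm
        _ = (C + |C'|) * d^2 * d^4 := by ring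
    have hG0 : Filter.Tendsto (fun d : ℝ => (1+4*a) * Real.sinh (d/eps d) / Real.cosh (d/eps d)^4)
        (nhdsWithin 0 (Set.Ioi 0)) (nhds 0) := by
      apply squeeze_zero_norm' hev
      have : Filter.Tendsto (fun d : ℝ => (C + |C'|) * d^2) (nhds (0:ℝ))
          (nhds ((C + |C'|) * 0^2)) := by
        apply Filter.Tendsto.const_mul
        exact (continuous_pow 2).tendsto 0
      have h0 : (C + |C'|) * (0:ℝ)^2 = 0 := by ring
      rw [h0] at this
      exact this.mono_left nhdsWithin_le_nhds
    have hcont : Continuous (fun u : ℝ => (1+4*a) * Real.sinh u / Real.cosh u^4) := by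
      apply Continuous.div
      · exact (continuous_const.mul Real.continuous_sinh)
      · exact (Real.continuous_cosh.pow 4)
      · intro x
        positivity
    have hG1 : Filter.Tendsto (fun d : ℝ => (1+4*a) * Real.sinh (d/eps d) / Real.cosh (d/eps d)^4)
        (nhdsWithin 0 (Set.Ioi 0)) (nhds ((1+4*a) * Real.sinh 1 / Real.cosh 1^4)) :=
      (hcont.tendsto 1).comp tendsto_d_div_eps
    have huniq := tendsto_nhds_unique hG1 hG0
    have hs1 : 0 < Real.sinh 1 := by rw [Real.sinh_pos_iff]; norm_num
    have hc1 : (0:ℝ) < Real.cosh 1 ^ 4 := by positivity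
    have hnum : (1+4*a) * Real.sinh 1 = 0 := by
      have := div_eq_zero_iff.mp huniq
      rcases this with h | h
      · exact h
      · exact absurd h (ne_of_gt hc1)
    have : 1 + 4*a = 0 := by
      rcases mul_eq_zero.mp hnum with h | h
      · exact h
      · exact absurd h (ne_of_gt hs1)
    linarith
  · intro ha t
    rw [Asymptotics.isBigO_iff]
    refine ⟨1 + 11*|a| + a^2, ?_⟩
    filter_upwards [hmemIoc] with d hd
    obtain ⟨hd0, hd1⟩ := hd
    have hk := key_est a hd0 hd1 t
    have h0 : 1 + 4*a = 0 := by rw [ha]; norm_num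
    rw [h0] at hk
    simp only [zero_mul, zero_div, add_zero] at hk
    have hn2 : ‖d^6‖ = d^6 := by
      rw [Real.norm_eq_abs]; exact abs_of_pos (pow_pos hd0 6)
    rw [Real.norm_eq_abs, hn2]
    exact hk

end Main
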